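/- Under the hypotheses of an ℓ-multicover of K_{m+1} with m ≥ 2 and μ = (m−1)ℓ, and Γ not complete multipartite: Γ ≅ K_{b[b]} − bK_b (the complete b-partite graph with parts of size b minus a perfect set of b vertex-disjoint copies of K_b), and b = ℓ+1 = m+1. -/

import Mathlib

open Finset

lemma sum_eq_of_le' {α : Type*} {s : Finset α} {g : α → ℕ} {c : ℕ}
    (h : ∀ i ∈ s, g i ≤ c) (htot : ∑ i ∈ s, g i = s.card * c) : ∀ i ∈ s, g i = c := by
  by_contra hcon
  push_neg at hcon
  obtain ⟨i0, hi0, hne⟩ := hcon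
  have hlt : ∑ i ∈ s, g i < ∑ _i ∈ s, c :=
    Finset.sum_lt_sum h ⟨i0, hi0, lt_of_le_of_ne (h i0 hi0) hne⟩
  rw [Finset.sum_const, smul_eq_mul, htot] at hlt
  omega

/-- The graph `K_{b[b]} - bK_b`: the complete `b`-partite graph with parts of size `b`
minus `b` vertex-disjoint copies of `K_b`.  Vertices are pairs `(i,j)`, with parts given
by the first coordinate and the deleted `K_b`'s by the second coordinate, so two vertices
are adjacent iff they differ in both coordinates. -/
def kbbMinusKb (b : ℕ) : SimpleGraph (Fin b × Fin b) where
  Adj p q := p.1 ≠ q.1 ∧ p.2 ≠ q.2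
  symm := by constructor; rintro p q ⟨h1, h2⟩; exact ⟨h1.symm, h2.symm⟩
  loopless := by constructor; rintro p ⟨h, -⟩; exact h rfl

/-- Under the hypotheses of an `ℓ`-multicover of `K_{m+1}` with `m ≥ 2`, `μ = (m-1)ℓ`,
and `Γ` not complete multipartite: `Γ ≅ K_{b[b]} - bK_b` and `b = ℓ+1 = m+1`. -/
theorem stmt14 {V : Type*} [Fintype V] (Γ : SimpleGraph V) [DecidableRel Γ.Adj]
    (n k l μ m b ℓ : ℕ)
    (hsrg : Γ.IsSRGWith n k l μ) (hconn : Γ.Connected)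
    (hnc : ∃ u v : V, u ≠ v ∧ ¬ Γ.Adj u v)
    (f : V → Fin (m + 1))
    (hsize : ∀ i : Fin (m + 1), ({v : V | f v = i}).ncard = b)
    (hind : ∀ u v : V, Γ.Adj u v → f u ≠ f v)
    (hmc : ∀ (v : V) (i : Fin (m + 1)), f v ≠ i →
      ({w : V | Γ.Adj v w ∧ f w = i}).ncard = ℓ)
    (hb : 2 ≤ b) (hm : 2 ≤ m) (hl : 1 ≤ ℓ)
    (hk : k = ℓ * m) (hn : n = (m + 1) * b)
    (hmu : μ = (m - 1) * ℓ)
    (hnotmp : ∃ u v : V, f u ≠ f v ∧ ¬ Γ.Adj u v) :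
    Nonempty (Γ ≃g kbbMinusKb b) ∧ b = ℓ + 1 ∧ b = m + 1 := by
  classical
  set F : Fin (m+1) → Finset V := fun i => univ.filter (fun v => f v = i) with hF
  set Nb : V → Fin (m+1) → Finset V := fun v i => univ.filter (fun w => Γ.Adj v w ∧ f w = i) with hNb
  have hFmem : ∀ (x : V) (i), x ∈ F i ↔ f x = i := by intro x i; simp [hF]
  have hNbmem : ∀ (v x : V) (i), x ∈ Nb v i ↔ Γ.Adj v x ∧ f x = i := by intro v x i; simp [hNb]
  have hFcard : ∀ i, (F i).card = b := by
    intro i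
    have := hsize i
    rwa [Set.ncard_eq_toFinset_card', Set.toFinset_setOf] at this
  have hNbcard : ∀ (v : V) (i), f v ≠ i → (Nb v i).card = ℓ := by
    intro v i hvi
    have := hmc v i hvi
    rwa [Set.ncard_eq_toFinset_card', Set.toFinset_setOf] at this
  have hCN : ∀ u v : V, u ≠ v → ¬Γ.Adj u v →
      (univ.filter fun x => Γ.Adj u x ∧ Γ.Adj v x).card = μ := by
    intro u v hne hna
    have h1 := hsrg.of_not_adj hne hna
    rw [← h1, ← Set.toFinset_card]
    congr 1
    ext x
    simp [SimpleGraph.mem_commonNeighbors]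
  -- Step A
  have stepA : ∀ u v : V, f u ≠ f v → ¬Γ.Adj u v → ∀ j, j ≠ f u → j ≠ f v →
      Nb u j = Nb v j := by
    intro u v hfuv hna j hju hjv
    have hne : u ≠ v := fun h => hfuv (by rw [h])
    set C : Finset V := univ.filter (fun x => Γ.Adj u x ∧ Γ.Adj v x) with hC
    have hCcard : C.card = μ := hCN u v hne hna
    set s : Finset (Fin (m+1)) := (univ.erase (f u)).erase (f v) with hs
    have hscard : s.card = m - 1 := by
      rw [hs, Finset.card_erase_of_mem (Finset.mem_erase.mpr ⟨Ne.symm hfuv, Finset.mem_univ _⟩),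
        Finset.card_erase_of_mem (Finset.mem_univ _)]
      simp
    have hfib : ∑ i ∈ s, (C.filter (fun x => f x = i)).card = μ := by
      rw [← hCcard, Finset.card_eq_sum_card_fiberwise (fun x _ => Finset.mem_univ (f x))]
      apply Finset.sum_subset (Finset.subset_univ s)
      intro i _ his
      rw [Finset.card_eq_zero, Finset.filter_eq_empty_iff]
      intro x hx
      rw [hC, Finset.mem_filter] at hx
      have h1 : i = f u ∨ i = f v := by
        by_contra hcon
        push_neg at hcon
        exact his (Finset.mem_erase.mpr ⟨hcon.2, Finset.mem_erase.mpr ⟨hcon.1, Finset.mem_univ _⟩⟩)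
      rcases h1 with h1 | h1
      · rw [h1]; exact Ne.symm (hind u x hx.2.1)
      · rw [h1]; exact Ne.symm (hind v x hx.2.2)
    have hsub : ∀ i ∈ s, C.filter (fun x => f x = i) ⊆ Nb u i ∧ C.filter (fun x => f x = i) ⊆ Nb v i := by
      intro i _
      constructor <;> intro x hx <;> rw [Finset.mem_filter, hC, Finset.mem_filter] at hx
      · exact (hNbmem u x i).mpr ⟨hx.1.2.1, hx.2⟩
      · exact (hNbmem v x i).mpr ⟨hx.1.2.2, hx.2⟩
    have hle : ∀ i ∈ s, (C.filter (fun x => f x = i)).card ≤ ℓ := by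
      intro i hi
      have := Finset.card_le_card (hsub i hi).1
      rwa [hNbcard u i (fun h => (Finset.mem_erase.mp (Finset.mem_erase.mp hi).2).1 h.symm)] at this
    have heach : ∀ i ∈ s, (C.filter (fun x => f x = i)).card = ℓ := by
      apply sum_eq_of_le' hle
      rw [hfib, hscard, hmu]
    have hj : j ∈ s := Finset.mem_erase.mpr ⟨hjv, Finset.mem_erase.mpr ⟨hju, Finset.mem_univ _⟩⟩
    have h1 : C.filter (fun x => f x = j) = Nb u j := by
      apply Finset.eq_of_subset_of_card_le (hsub j hj).1
      rw [hNbcard u j (Ne.symm hju), heach j hj]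
    have h2 : C.filter (fun x => f x = j) = Nb v j := by
      apply Finset.eq_of_subset_of_card_le (hsub j hj).2
      rw [hNbcard v j (Ne.symm hjv), heach j hj]
    rw [← h1, ← h2]
  -- Step B : l + 1 <= b
  have hlb : ℓ + 1 ≤ b := by
    obtain ⟨u, v, hf, hna⟩ := hnotmp
    have hsub : Nb u (f v) ⊆ (F (f v)).erase v := by
      intro w hw
      rw [hNbmem] at hw
      refine Finset.mem_erase.mpr ⟨?_, (hFmem w _).mpr hw.2⟩
      rintro rfl; exact hna hw.1
    have h2 := Finset.card_le_card hsub
    rw [hNbcard u (f v) hf, Finset.card_erase_of_mem ((hFmem v _).mpr rfl), hFcard] at h2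
    omega
  have hNbsub : ∀ (v : V) (i), Nb v i ⊆ F i := by
    intro v i x hx
    exact (hFmem x i).mpr ((hNbmem v x i).mp hx).2
  -- Step C : b = l + 1
  have hbl : b = ℓ + 1 := by
    by_contra hcon
    have hb2 : ℓ + 2 ≤ b := by omega
    obtain ⟨u, -, -⟩ := hnc
    obtain ⟨j, hju⟩ : ∃ j : Fin (m+1), j ≠ f u := by
      have hne : ((univ : Finset (Fin (m+1))).erase (f u)).Nonempty := by
        rw [← Finset.card_pos, Finset.card_erase_of_mem (Finset.mem_univ _)]
        simp
        omega
      obtain ⟨j, hj⟩ := hne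
      exact ⟨j, (Finset.mem_erase.mp hj).1⟩
    obtain ⟨t, htj, htu⟩ : ∃ t : Fin (m+1), t ≠ j ∧ t ≠ f u := by
      have hne : (((univ : Finset (Fin (m+1))).erase (f u)).erase j).Nonempty := by
        rw [← Finset.card_pos,
          Finset.card_erase_of_mem (Finset.mem_erase.mpr ⟨hju, Finset.mem_univ _⟩),
          Finset.card_erase_of_mem (Finset.mem_univ _)]
        simp
        omega
      obtain ⟨t, ht⟩ := hne
      rw [Finset.mem_erase, Finset.mem_erase] at ht
      exact ⟨t, ht.1, ht.2.1⟩
    set S : Finset V := F j \ Nb u j with hS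
    have hScard : S.card = b - ℓ := by
      rw [hS, Finset.card_sdiff_of_subset (hNbsub u j), hFcard, hNbcard u j (Ne.symm hju)]
    have hSmem : ∀ v ∈ S, f v = j ∧ ¬Γ.Adj u v := by
      intro v hv
      rw [hS, Finset.mem_sdiff, hFmem, hNbmem] at hv
      exact ⟨hv.1, fun h => hv.2 ⟨h, hv.1⟩⟩
    obtain ⟨w, hw⟩ : (Nb u t).Nonempty := by
      rw [← Finset.card_pos, hNbcard u t (Ne.symm htu)]; omega
    have hwmem := (hNbmem u w t).mp hw
    have hC1 : b - ℓ ≤ ℓ := by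
      have hsub : S ⊆ Nb w j := by
        intro v hv
        obtain ⟨hfv, hnauv⟩ := hSmem v hv
        have h1 : Nb u t = Nb v t :=
          stepA u v (by rw [hfv]; exact Ne.symm hju) hnauv t htu (by rw [hfv]; exact htj)
        have h2 : w ∈ Nb v t := h1 ▸ hw
        rw [hNbmem] at h2
        exact (hNbmem w v j).mpr ⟨h2.1.symm, hfv⟩
      have h3 := Finset.card_le_card hsub
      rw [hNbcard w j (by rw [hwmem.2]; exact htj)] at h3
      omega
    obtain ⟨v, hv, v', hv', hvv'⟩ :=
      Finset.one_lt_card.mp (show 1 < S.card by rw [hScard]; omega)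
    obtain ⟨hfv, hnuv⟩ := hSmem v hv
    obtain ⟨hfv', hnuv'⟩ := hSmem v' hv'
    have hnvv' : ¬Γ.Adj v v' := fun h => hind v v' h (by rw [hfv, hfv'])
    set C : Finset V := univ.filter (fun x => Γ.Adj v x ∧ Γ.Adj v' x) with hC
    have hCcard : C.card = μ := hCN v v' hvv' hnvv'
    set s : Finset (Fin (m+1)) := (univ.erase (f u)).erase j with hs
    have hjfu : j ∈ (univ : Finset (Fin (m+1))).erase (f u) :=
      Finset.mem_erase.mpr ⟨hju, Finset.mem_univ _⟩
    have hscard : s.card = m - 1 := by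
      rw [hs, Finset.card_erase_of_mem hjfu, Finset.card_erase_of_mem (Finset.mem_univ _)]
      simp
    have heq : ∀ t' ∈ s, C.filter (fun x => f x = t') = Nb u t' := by
      intro t' ht'
      rw [hs, Finset.mem_erase, Finset.mem_erase] at ht'
      have h1 : Nb u t' = Nb v t' :=
        stepA u v (by rw [hfv]; exact Ne.symm hju) hnuv t' ht'.2.1 (by rw [hfv]; exact ht'.1)
      have h2 : Nb u t' = Nb v' t' :=
        stepA u v' (by rw [hfv']; exact Ne.symm hju) hnuv' t' ht'.2.1 (by rw [hfv']; exact ht'.1)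
      ext x
      simp only [hC, Finset.mem_filter, Finset.mem_univ, true_and]
      constructor
      · rintro ⟨⟨ha, -⟩, hfx⟩
        have : x ∈ Nb v t' := (hNbmem v x t').mpr ⟨ha, hfx⟩
        rw [← h1] at this
        exact this
      · intro hx
        have hx1 := (hNbmem v x t').mp (h1 ▸ hx)
        have hx2 := (hNbmem v' x t').mp (h2 ▸ hx)
        exact ⟨⟨hx1.1, hx2.1⟩, hx1.2⟩
    have hsumsplit :
        ∑ i ∈ (univ : Finset (Fin (m+1))), (C.filter (fun x => f x = i)).card =
          (C.filter (fun x => f x = f u)).card + ((C.filter (fun x => f x = j)).card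
            + ∑ i ∈ s, (C.filter (fun x => f x = i)).card) := by
      rw [← Finset.add_sum_erase _ _ (Finset.mem_univ (f u)), ← Finset.add_sum_erase _ _ hjfu]
    have hfibj : (C.filter (fun x => f x = j)).card = 0 := by
      rw [Finset.card_eq_zero, Finset.filter_eq_empty_iff]
      intro x hx
      rw [hC, Finset.mem_filter] at hx
      rw [← hfv]
      exact Ne.symm (hind v x hx.2.1)
    have hsums : ∑ i ∈ s, (C.filter (fun x => f x = i)).card = (m - 1) * ℓ := by
      rw [Finset.sum_congr rfl (fun i hi => by
        rw [heq i hi, hNbcard u i (fun h => (Finset.mem_erase.mp (Finset.mem_erase.mp hi).2).1 h.symm)])]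
      rw [Finset.sum_const, smul_eq_mul, hscard]
    have htot : C.card = ∑ i ∈ (univ : Finset (Fin (m+1))), (C.filter (fun x => f x = i)).card :=
      Finset.card_eq_sum_card_fiberwise (fun x _ => Finset.mem_univ (f x))
    have hfu0 : (C.filter (fun x => f x = f u)).card = 0 := by
      rw [hCcard, hsumsplit, hfibj, hsums, hmu] at htot
      omega
    rw [Finset.card_eq_zero] at hfu0
    -- Nb v (f u) and Nb v' (f u) are disjoint subsets of (F (f u)).erase u
    have hsub1 : Nb v (f u) ∪ Nb v' (f u) ⊆ (F (f u)).erase u := by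
      intro x hx
      rw [Finset.mem_union] at hx
      rcases hx with hx | hx
      · rw [hNbmem] at hx
        refine Finset.mem_erase.mpr ⟨?_, (hFmem x _).mpr hx.2⟩
        rintro rfl; exact hnuv hx.1.symm
      · rw [hNbmem] at hx
        refine Finset.mem_erase.mpr ⟨?_, (hFmem x _).mpr hx.2⟩
        rintro rfl; exact hnuv' hx.1.symm
    have hdisj : Disjoint (Nb v (f u)) (Nb v' (f u)) := by
      rw [Finset.disjoint_left]
      intro x hx1 hx2
      rw [hNbmem] at hx1 hx2
      have : x ∈ C.filter (fun x => f x = f u) := by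
        rw [hC, Finset.mem_filter, Finset.mem_filter]
        exact ⟨⟨Finset.mem_univ _, hx1.1, hx2.1⟩, hx1.2⟩
      rw [hfu0] at this
      exact absurd this (Finset.notMem_empty x)
    have hcards := Finset.card_le_card hsub1
    rw [Finset.card_union_of_disjoint hdisj,
      hNbcard v (f u) (by rw [hfv]; exact hju),
      hNbcard v' (f u) (by rw [hfv']; exact hju),
      Finset.card_erase_of_mem ((hFmem u _).mpr rfl), hFcard] at hcards
    omega
  -- Step D : the partner map r
  have hrex : ∀ v : V, ∃ x : V, f x = 0 ∧ ¬Γ.Adj v x ∧ (f v = 0 → x = v) ∧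
      (f v ≠ 0 → F 0 \ Nb v 0 = {x}) := by
    intro v
    by_cases hv0 : f v = 0
    · exact ⟨v, hv0, Γ.loopless.irrefl v, fun _ => rfl, fun h => absurd hv0 h⟩
    · have hcard : (F 0 \ Nb v 0).card = 1 := by
        rw [Finset.card_sdiff_of_subset (hNbsub v 0), hFcard, hNbcard v 0 hv0]
        omega
      obtain ⟨x, hx⟩ := Finset.card_eq_one.mp hcard
      have hxm : x ∈ F 0 \ Nb v 0 := hx ▸ Finset.mem_singleton_self x
      rw [Finset.mem_sdiff, hFmem, hNbmem] at hxm
      exact ⟨x, hxm.1, fun h => hxm.2 ⟨h, hxm.1⟩, fun h => absurd h hv0, fun _ => hx⟩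
  choose r hr0 hrna hrself hruniq using hrex
  have hchar0 : ∀ u v : V, f u = 0 → f v ≠ 0 → (¬Γ.Adj u v ↔ r u = r v) := by
    intro u v hu0 hv0
    rw [hrself u hu0]
    constructor
    · intro hna
      have hmem : u ∈ F 0 \ Nb v 0 := by
        rw [Finset.mem_sdiff, hFmem, hNbmem]
        exact ⟨hu0, fun h => hna h.1.symm⟩
      rw [hruniq v hv0] at hmem
      exact Finset.mem_singleton.mp hmem
    · intro h
      have hmem : r v ∈ F 0 \ Nb v 0 := by
        rw [hruniq v hv0]; exact Finset.mem_singleton_self _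
      rw [← h] at hmem
      rw [Finset.mem_sdiff, hNbmem] at hmem
      intro hadj
      exact hmem.2 ⟨hadj.symm, hu0⟩
  have hchar : ∀ u v : V, f u ≠ f v → (¬Γ.Adj u v ↔ r u = r v) := by
    intro u v hfuv
    by_cases hu0 : f u = 0
    · exact hchar0 u v hu0 (by rw [← hu0]; exact Ne.symm hfuv)
    · by_cases hv0 : f v = 0
      · rw [show (¬Γ.Adj u v ↔ ¬Γ.Adj v u) from
          ⟨fun h ha => h ha.symm, fun h ha => h ha.symm⟩, eq_comm]
        exact hchar0 v u hv0 hu0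
      · constructor
        · intro hna
          have h1 : Nb u 0 = Nb v 0 := stepA u v hfuv hna 0 (Ne.symm hu0) (Ne.symm hv0)
          have h2 : ({r u} : Finset V) = {r v} := by
            rw [← hruniq u hu0, ← hruniq v hv0, h1]
          exact Finset.singleton_injective h2
        · intro h hadj
          have hxu : ¬Γ.Adj (r u) u := fun ha => hrna u ha.symm
          have hfx : f (r u) ≠ f u := by rw [hr0]; exact Ne.symm hu0
          have h1 : Nb (r u) (f v) = Nb u (f v) :=
            stepA (r u) u hfx hxu (f v) (by rw [hr0]; exact hv0) (Ne.symm hfuv)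
          have hv : v ∈ Nb u (f v) := (hNbmem u v (f v)).mpr ⟨hadj, rfl⟩
          rw [← h1, hNbmem] at hv
          exact hrna v (h ▸ hv.1.symm)
  have hinj : ∀ u v : V, f u = f v → r u = r v → u = v := by
    intro u v hf hr
    by_cases hu0 : f u = 0
    · rw [← hrself u hu0, hr, hrself v (by rw [← hf]; exact hu0)]
    · have hxu : f (r u) ≠ f u := by rw [hr0]; exact Ne.symm hu0
      have hcard : (F (f u) \ Nb (r u) (f u)).card ≤ 1 := by
        rw [Finset.card_sdiff_of_subset (hNbsub (r u) (f u)), hFcard, hNbcard (r u) (f u) hxu, hbl]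
        omega
      have hu : u ∈ F (f u) \ Nb (r u) (f u) := by
        rw [Finset.mem_sdiff, hFmem, hNbmem]
        exact ⟨rfl, fun h => hrna u h.1.symm⟩
      have hv : v ∈ F (f u) \ Nb (r u) (f u) := by
        rw [Finset.mem_sdiff, hFmem, hNbmem]
        refine ⟨hf.symm, fun h => hrna v ?_⟩
        rw [← hr]; exact h.1.symm
      exact Finset.card_le_one.mp hcard u hu v hv
  have hadj : ∀ u v : V, Γ.Adj u v ↔ (f u ≠ f v ∧ r u ≠ r v) := by
    intro u v
    constructor
    · intro h
      have hf := hind u v h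
      exact ⟨hf, fun hre => ((hchar u v hf).mpr hre) h⟩
    · rintro ⟨hf, hre⟩
      by_contra hna
      exact hre ((hchar u v hf).mp hna)
  -- the bijection
  have hrF0 : ∀ v, r v ∈ F 0 := fun v => (hFmem _ _).mpr (hr0 v)
  have hcardF0 : Fintype.card {x // x ∈ F 0} = b := by rw [Fintype.card_coe]; exact hFcard 0
  let e : {x // x ∈ F 0} ≃ Fin b := Fintype.equivFinOfCardEq hcardF0
  let g : V → Fin b := fun v => e ⟨r v, hrF0 v⟩
  have hg : ∀ u v : V, g u = g v ↔ r u = r v := by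
    intro u v
    constructor
    · intro h
      exact Subtype.ext_iff.mp (e.injective h)
    · intro h
      show e ⟨r u, hrF0 u⟩ = e ⟨r v, hrF0 v⟩
      congr 1
      exact Subtype.ext h
  have hgne : ∀ u v : V, g u ≠ g v ↔ r u ≠ r v := fun u v => not_congr (hg u v)
  let φ : V → Fin (m+1) × Fin b := fun v => (f v, g v)
  have hφinj : Function.Injective φ := by
    intro u v h
    have h1 : f u = f v := congrArg Prod.fst h
    have h2 : g u = g v := congrArg Prod.snd h
    exact hinj u v h1 ((hg u v).mp h2)
  have hφbij : Function.Bijective φ := by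
    rw [Fintype.bijective_iff_injective_and_card]
    refine ⟨hφinj, ?_⟩
    rw [hsrg.card, hn]
    simp
  -- Step E : b = m + 1
  have hbm : b = m + 1 := by
    obtain ⟨u, hu, u', hu', huu'⟩ :=
      Finset.one_lt_card.mp (show 1 < (F 0).card by rw [hFcard]; omega)
    rw [hFmem] at hu hu'
    have hfey : f u = f u' := by rw [hu, hu']
    have hna : ¬Γ.Adj u u' := fun h => hind u u' h hfey
    have hguu' : g u ≠ g u' := fun h => huu' (hinj u u' hfey ((hg u u').mp h))
    have hCcard := hCN u u' huu' hna
    have hset : (univ.filter fun x => Γ.Adj u x ∧ Γ.Adj u' x) =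
        univ.filter (fun x => (0 : Fin (m+1)) ≠ f x ∧ (g u ≠ g x ∧ g u' ≠ g x)) := by
      ext x
      simp only [Finset.mem_filter, Finset.mem_univ, true_and]
      rw [hadj u x, hadj u' x, hu, hu', ← hgne u x, ← hgne u' x]
      tauto
    rw [hset] at hCcard
    have hcount : (univ.filter (fun x => (0:Fin (m+1)) ≠ f x ∧ (g u ≠ g x ∧ g u' ≠ g x))).card
        = ((univ.filter (fun i : Fin (m+1) => (0:Fin (m+1)) ≠ i)) ×ˢ
           (univ.filter (fun c : Fin b => g u ≠ c ∧ g u' ≠ c))).card := by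
      apply Finset.card_bij (fun x _ => φ x)
      · intro a ha
        rw [Finset.mem_filter] at ha
        rw [Finset.mem_product, Finset.mem_filter, Finset.mem_filter]
        exact ⟨⟨Finset.mem_univ _, ha.2.1⟩, ⟨Finset.mem_univ _, ha.2.2⟩⟩
      · intro a _ a' _ h
        exact hφinj h
      · intro p hp
        obtain ⟨x, hx⟩ := hφbij.2 p
        rw [Finset.mem_product, Finset.mem_filter, Finset.mem_filter] at hp
        have h1 : f x = p.1 := by rw [← hx]
        have h2 : g x = p.2 := by rw [← hx]
        refine ⟨x, ?_, hx⟩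
        rw [Finset.mem_filter]
        exact ⟨Finset.mem_univ _, by rw [h1]; exact hp.1.2, by rw [h2]; exact hp.2.2⟩
    have hprod1 : (univ.filter (fun i : Fin (m+1) => (0:Fin (m+1)) ≠ i)).card = m := by
      rw [Finset.filter_ne, Finset.card_erase_of_mem (Finset.mem_univ _)]
      simp
    have hprod2 : (univ.filter (fun c : Fin b => g u ≠ c ∧ g u' ≠ c)).card = b - 2 := by
      have heq2 : (univ.filter (fun c : Fin b => g u ≠ c ∧ g u' ≠ c))
          = ((univ : Finset (Fin b)).erase (g u)).erase (g u') := by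
        ext c
        rw [Finset.mem_filter, Finset.mem_erase, Finset.mem_erase]
        constructor
        · rintro ⟨-, h1, h2⟩
          exact ⟨Ne.symm h2, Ne.symm h1, Finset.mem_univ _⟩
        · rintro ⟨h1, h2, -⟩
          exact ⟨Finset.mem_univ _, Ne.symm h2, Ne.symm h1⟩
      rw [heq2, Finset.card_erase_of_mem
          (Finset.mem_erase.mpr ⟨Ne.symm hguu', Finset.mem_univ _⟩),
        Finset.card_erase_of_mem (Finset.mem_univ _)]
      simp
      omega
    rw [hcount, Finset.card_product, hprod1, hprod2, hmu] at hCcard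
    obtain ⟨m', rfl⟩ : ∃ m', m = m' + 1 := ⟨m - 1, by omega⟩
    obtain ⟨l', rfl⟩ : ∃ l', ℓ = l' + 1 := ⟨ℓ - 1, by omega⟩
    rw [hbl] at hCcard ⊢
    have heqn : (m' + 1) * l' = m' * (l' + 1) := by
      rw [show l' + 1 + 1 - 2 = l' by omega, show m' + 1 - 1 = m' by omega] at hCcard
      exact hCcard
    have heqn2 : m' * l' + l' = m' * l' + m' := by ring_nf; ring_nf at heqn; linarith
    have : l' = m' := by exact Nat.add_left_cancel heqn2
    omega
  -- final isomorphism
  refine ⟨⟨?_⟩, hbl, hbm⟩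
  let Φ : V ≃ Fin (m+1) × Fin b := Equiv.ofBijective φ hφbij
  let Ψ : V ≃ Fin b × Fin b := Φ.trans (Equiv.prodCongr (finCongr hbm.symm) (Equiv.refl (Fin b)))
  refine ⟨Ψ, ?_⟩
  intro x y
  show (kbbMinusKb b).Adj (Ψ x) (Ψ y) ↔ Γ.Adj x y
  have hΨ : ∀ z : V, Ψ z = (finCongr hbm.symm (f z), g z) := fun z => rfl
  rw [hΨ, hΨ, hadj x y]
  show ((finCongr hbm.symm (f x) ≠ finCongr hbm.symm (f y)) ∧ g x ≠ g y) ↔ _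
  rw [← hgne x y]
  have hfc : finCongr hbm.symm (f x) ≠ finCongr hbm.symm (f y) ↔ f x ≠ f y :=
    not_congr ⟨fun h => (finCongr hbm.symm).injective h, fun h => by rw [h]⟩
  rw [hfc]
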